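/- arXiv:2501.09013 — 5 statements merged into one kernel-verified Lean document; each statement's English description precedes it below -/
import Mathlib

section
/- Let F = [F₁ F₂] be an n×k matrix with full row rank, where F₁ is n×s and F₂ is n×(k−s), and let H be an n×s matrix. There exists an n×(k−s) matrix G₂ such that G = [H G₂] satisfies FG* = I_n if and only if every column of I_n − F₁H* lies in the column span of F₂. -/
open Matrix

/-- There exists `G₂` with `[F₁ F₂][H G₂]ᴴ = 1` iff every column of `1 - F₁ Hᴴ`
lies in the column span of `F₂`. -/
theorem dual_frame_completion_direct
    {𝕜 : Type*} [RCLike 𝕜] {n s m : ℕ}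
    (F₁ : Matrix (Fin n) (Fin s) 𝕜) (F₂ : Matrix (Fin n) (Fin m) 𝕜)
    (hF : (fromCols F₁ F₂).rank = n)
    (H : Matrix (Fin n) (Fin s) 𝕜) :
    (∃ G₂ : Matrix (Fin n) (Fin m) 𝕜,
        fromCols F₁ F₂ * (fromCols H G₂)ᴴ = 1) ↔
      ∀ j : Fin n, (fun i => ((1 : Matrix (Fin n) (Fin n) 𝕜) - F₁ * Hᴴ) i j) ∈
        Submodule.span 𝕜 (Set.range fun c => (fun i => F₂ i c)) := by
  have key : Submodule.span 𝕜 (Set.range fun c => (fun i => F₂ i c)) =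
      LinearMap.range F₂.mulVecLin := by
    rw [Matrix.range_mulVecLin]
    rfl
  have hsimp : ∀ G₂ : Matrix (Fin n) (Fin m) 𝕜,
      fromCols F₁ F₂ * (fromCols H G₂)ᴴ = F₁ * Hᴴ + F₂ * G₂ᴴ := by
    intro G₂
    rw [conjTranspose_fromCols_eq_fromRows_conjTranspose, fromCols_mul_fromRows]
  constructor
  · rintro ⟨G₂, hG⟩ j
    rw [hsimp] at hG
    rw [key]
    refine ⟨fun c => G₂ᴴ c j, ?_⟩
    funext i
    have : (F₂ * G₂ᴴ) i j = ((1:Matrix (Fin n) (Fin n) 𝕜) - F₁ * Hᴴ) i j := by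
      rw [Matrix.sub_apply, eq_sub_iff_add_eq, ← Matrix.add_apply, add_comm, hG]
    simpa [Matrix.mulVec, Matrix.mul_apply, dotProduct] using this
  · intro h
    choose v hv using fun j => (key ▸ h j : _)
    refine ⟨Matrix.of fun i c => star (v i c), ?_⟩
    rw [hsimp]
    ext i j
    have := congrFun (hv j) i
    simp only [Matrix.mulVecLin_apply, Matrix.mulVec, dotProduct] at this
    rw [Matrix.sub_apply, eq_sub_iff_add_eq] at this
    rw [Matrix.add_apply, ← this, add_comm]
    congr 1
    simp [Matrix.mul_apply, Matrix.conjTranspose_apply]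
end

section
/- Let F be an n×k full-row-rank matrix and P an invertible k×k matrix with P F* = [I_n; 0]. Write P in block form with P₁₁ = P_{n×s} (top-left n×s block) and P₂₁ = P_{(k−n)×s} (bottom-left (k−n)×s block). Given an n×s matrix H with s ≤ k − n, there exists a dual frame G of F whose first s columns equal H if and only if every column of H* − P₁₁* lies in the column span of P₂₁*. -/
open Matrix

/-- Dual frame completion via the product matrix `P`: there exists a dual frame `G` of `F`
whose first `s` columns equal `H` iff every column of `Hᴴ - P₁₁ᴴ` lies in the column span
of `P₂₁ᴴ`. -/
theorem dual_frame_completion_indirect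
    {𝕜 : Type*} [RCLike 𝕜] {n m s t : ℕ}
    (F : Matrix (Fin n) (Fin s ⊕ Fin t) 𝕜)
    (hF : F.rank = n)
    (P : Matrix (Fin n ⊕ Fin m) (Fin s ⊕ Fin t) 𝕜)
    (Q : Matrix (Fin s ⊕ Fin t) (Fin n ⊕ Fin m) 𝕜)
    (hPQ : P * Q = 1) (hQP : Q * P = 1)
    (hP : P * Fᴴ = fromRows (1 : Matrix (Fin n) (Fin n) 𝕜) (0 : Matrix (Fin m) (Fin n) 𝕜))
    (hs : s ≤ m)
    (H : Matrix (Fin n) (Fin s) 𝕜) :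
    (∃ G : Matrix (Fin n) (Fin s ⊕ Fin t) 𝕜,
        F * Gᴴ = 1 ∧ ∀ i j, G i (Sum.inl j) = H i j) ↔
      ∀ j : Fin n, (fun i => (Hᴴ - (P.toBlocks₁₁)ᴴ) i j) ∈
        Submodule.span 𝕜 (Set.range fun c => (fun i => ((P.toBlocks₂₁)ᴴ) i c)) := by
  classical
  have hFP : F * Pᴴ = fromCols (1 : Matrix (Fin n) (Fin n) 𝕜)
      (0 : Matrix (Fin n) (Fin m) 𝕜) := by
    have := congrArg conjTranspose hP
    simpa [conjTranspose_mul, conjTranspose_fromRows_eq_fromCols_conjTranspose] using this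
  constructor
  · rintro ⟨G, hG1, hG2⟩
    set N : Matrix (Fin n ⊕ Fin m) (Fin n) 𝕜 := Qᴴ * Gᴴ with hN
    have hGN : Gᴴ = Pᴴ * N := by
      rw [hN, ← Matrix.mul_assoc, ← conjTranspose_mul, hQP, conjTranspose_one, Matrix.one_mul]
    have htop : ∀ a i, N (Sum.inl a) i = if a = i then (1:𝕜) else 0 := by
      have h1 : fromCols (1 : Matrix (Fin n) (Fin n) 𝕜)
          (0 : Matrix (Fin n) (Fin m) 𝕜) * N = 1 := by
        rw [← hFP, Matrix.mul_assoc, ← hGN, hG1]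
      intro a i
      have := congrFun (congrFun h1 a) i
      simpa [Matrix.mul_apply, fromCols, Fintype.sum_sum_type, Matrix.one_apply] using this
    intro j
    rw [Submodule.mem_span_range_iff_exists_fun]
    refine ⟨fun c => N (Sum.inr c) j, ?_⟩
    funext i
    have hH : H j i = P (Sum.inl j) (Sum.inl i) +
        ∑ c, P (Sum.inr c) (Sum.inl i) * star (N (Sum.inr c) j) := by
      have h0 : G j (Sum.inl i) = star ((Pᴴ * N) (Sum.inl i) j) := by
        rw [← hGN]; simp
      rw [← hG2 j i, h0]
      simp [Matrix.mul_apply, Fintype.sum_sum_type, htop, conjTranspose_apply,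
        apply_ite, mul_comm]
    simp only [Finset.sum_apply, Pi.smul_apply, smul_eq_mul, Matrix.sub_apply,
      conjTranspose_apply, toBlocks₁₁, toBlocks₂₁, of_apply, hH]
    rw [star_add, star_sum]
    simp [mul_comm]
  · intro h
    choose x hx using fun j => (Submodule.mem_span_range_iff_exists_fun 𝕜).mp (h j)
    set N : Matrix (Fin n ⊕ Fin m) (Fin n) 𝕜 :=
      fun k j => Sum.elim (fun a => if a = j then (1:𝕜) else 0) (fun c => x j c) k with hNdef
    have hN1 : ∀ a j, N (Sum.inl a) j = if a = j then (1:𝕜) else 0 := fun _ _ => rfl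
    have hN2 : ∀ c j, N (Sum.inr c) j = x j c := fun _ _ => rfl
    refine ⟨Nᴴ * P, ?_, ?_⟩
    · have hFP' : F * (Nᴴ * P)ᴴ = (fromCols (1 : Matrix (Fin n) (Fin n) 𝕜)
          (0 : Matrix (Fin n) (Fin m) 𝕜)) * N := by
        rw [conjTranspose_mul, conjTranspose_conjTranspose, ← Matrix.mul_assoc, hFP]
      rw [hFP']
      ext i j
      simp [Matrix.mul_apply, fromCols, Fintype.sum_sum_type, Matrix.one_apply, hN1, hN2]
    · intro i j
      have hxi := congrFun (hx i) j
      simp only [Finset.sum_apply, Pi.smul_apply, smul_eq_mul, Matrix.sub_apply,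
        conjTranspose_apply, toBlocks₁₁, toBlocks₂₁, of_apply] at hxi
      have hxi' : ∑ c, star (x i c) * P (Sum.inr c) (Sum.inl j)
          = H i j - P (Sum.inl i) (Sum.inl j) := by
        have := congrArg star hxi
        simpa [star_sum, star_sub, star_mul', mul_comm] using this
      have hform : (Nᴴ * P) i (Sum.inl j) = P (Sum.inl i) (Sum.inl j) +
          ∑ c, star (x i c) * P (Sum.inr c) (Sum.inl j) := by
        simp [Matrix.mul_apply, Fintype.sum_sum_type, hN1, hN2, conjTranspose_apply, apply_ite]
      rw [hform, hxi']
      ring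
end

section
/- Let F be an n×k full-row-rank matrix, P invertible k×k with P F* = [I_n; 0], and s = k − n. If the bottom-left (k−n)×(k−n) block P₂₁ of P is invertible, then for any n×(k−n) matrix H there is exactly one dual frame G of F whose first k−n columns equal H; it is given by G = [I_n A]P with A = (H − P₁₁)P₂₁⁻¹, where P₁₁ is the top-left n×(k−n) block of P. -/
open Matrix

lemma dfci_cols {𝕜 : Type*} [RCLike 𝕜] {n m : ℕ}
    (P : Matrix (Fin n ⊕ Fin m) (Fin m ⊕ Fin n) 𝕜)
    (A : Matrix (Fin n) (Fin m) 𝕜) (i : Fin n) (j : Fin m) :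
    (fromCols (1 : Matrix (Fin n) (Fin n) 𝕜) A * P) i (Sum.inl j)
      = (P.toBlocks₁₁ + A * P.toBlocks₂₁) i j := by
  simp [mul_apply, Fintype.sum_sum_type, fromCols, one_apply, toBlocks₁₁, toBlocks₂₁]

lemma dfci_dual {𝕜 : Type*} [RCLike 𝕜] {n m : ℕ}
    (F : Matrix (Fin n) (Fin m ⊕ Fin n) 𝕜)
    (P : Matrix (Fin n ⊕ Fin m) (Fin m ⊕ Fin n) 𝕜)
    (hP : P * Fᴴ = fromRows (1 : Matrix (Fin n) (Fin n) 𝕜) (0 : Matrix (Fin m) (Fin n) 𝕜))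
    (A : Matrix (Fin n) (Fin m) 𝕜) :
    F * (fromCols (1 : Matrix (Fin n) (Fin n) 𝕜) A * P)ᴴ = 1 := by
  have hFP : F * Pᴴ = fromCols (1 : Matrix (Fin n) (Fin n) 𝕜)
      (0 : Matrix (Fin n) (Fin m) 𝕜) := by
    have := congrArg conjTranspose hP
    simpa [conjTranspose_mul, conjTranspose_fromRows_eq_fromCols_conjTranspose] using this
  rw [conjTranspose_mul, ← Matrix.mul_assoc, hFP,
    conjTranspose_fromCols_eq_fromRows_conjTranspose, fromCols_mul_fromRows]
  simp

/-- If `s = k - n` and the bottom-left block `P₂₁` of `P` is invertible, the dual frame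
completion is unique, given by `G = [1 A] P` with `A = (H - P₁₁) P₂₁⁻¹`. -/
theorem dual_frame_completion_unique_indirect
    {𝕜 : Type*} [RCLike 𝕜] {n m : ℕ}
    (F : Matrix (Fin n) (Fin m ⊕ Fin n) 𝕜)
    (hF : F.rank = n)
    (P : Matrix (Fin n ⊕ Fin m) (Fin m ⊕ Fin n) 𝕜)
    (Q : Matrix (Fin m ⊕ Fin n) (Fin n ⊕ Fin m) 𝕜)
    (hPQ : P * Q = 1) (hQP : Q * P = 1)
    (hP : P * Fᴴ = fromRows (1 : Matrix (Fin n) (Fin n) 𝕜) (0 : Matrix (Fin m) (Fin n) 𝕜))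
    (hP21 : IsUnit (P.toBlocks₂₁).det)
    (H : Matrix (Fin n) (Fin m) 𝕜) :
    (∃! G : Matrix (Fin n) (Fin m ⊕ Fin n) 𝕜,
        F * Gᴴ = 1 ∧ ∀ i j, G i (Sum.inl j) = H i j) ∧
    (F * (fromCols (1 : Matrix (Fin n) (Fin n) 𝕜)
          ((H - P.toBlocks₁₁) * (P.toBlocks₂₁)⁻¹) * P)ᴴ = 1 ∧
      ∀ i j, (fromCols (1 : Matrix (Fin n) (Fin n) 𝕜)
          ((H - P.toBlocks₁₁) * (P.toBlocks₂₁)⁻¹) * P) i (Sum.inl j) = H i j) := by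
  set A : Matrix (Fin n) (Fin m) 𝕜 := (H - P.toBlocks₁₁) * (P.toBlocks₂₁)⁻¹ with hA
  have hcols : ∀ i j, (fromCols (1 : Matrix (Fin n) (Fin n) 𝕜) A * P) i (Sum.inl j)
      = H i j := by
    intro i j
    rw [dfci_cols]
    have : P.toBlocks₁₁ + A * P.toBlocks₂₁ = H := by
      rw [hA, nonsing_inv_mul_cancel_right _ _ hP21]
      abel
    rw [this]
  have hdual := dfci_dual F P hP A
  refine ⟨⟨fromCols 1 A * P, ⟨hdual, hcols⟩, ?_⟩, hdual, hcols⟩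
  rintro G ⟨hG1, hG2⟩
  -- write G = fromCols 1 B * P
  have hGrep : G = fromCols (G * Q).toCols₁ (G * Q).toCols₂ * P := by
    rw [fromCols_toCols, Matrix.mul_assoc, hQP, Matrix.mul_one]
  have hFP : F * Pᴴ = fromCols (1 : Matrix (Fin n) (Fin n) 𝕜)
      (0 : Matrix (Fin n) (Fin m) 𝕜) := by
    have := congrArg conjTranspose hP
    simpa [conjTranspose_mul, conjTranspose_fromRows_eq_fromCols_conjTranspose] using this
  have hC1 : (G * Q).toCols₁ = 1 := by
    have h := hG1
    rw [hGrep, conjTranspose_mul, ← Matrix.mul_assoc, hFP,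
      conjTranspose_fromCols_eq_fromRows_conjTranspose, fromCols_mul_fromRows] at h
    simp only [Matrix.zero_mul, add_zero, Matrix.one_mul] at h
    have := congrArg conjTranspose h
    simpa using this
  set B := (G * Q).toCols₂ with hB
  have hGrep' : G = fromCols 1 B * P := by rw [hGrep, hC1]; rfl
  have hBH : P.toBlocks₁₁ + B * P.toBlocks₂₁ = H := by
    ext i j
    rw [← dfci_cols P B i j]
    have h2 := hG2 i j
    rw [hGrep'] at h2
    exact h2
  have : B = A := by
    have : B * P.toBlocks₂₁ = H - P.toBlocks₁₁ := by
      rw [← hBH]; abel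
    rw [hA, ← this, mul_nonsing_inv_cancel_right _ _ hP21]
  rw [hGrep', this]; rfl
end

section
/- Let F be an n×k full-row-rank matrix and P invertible k×k with P F* = [I_n; 0]. Partition P = [P₁ P₂] with P₁ of size k×s. Let H be an n×s matrix, W = diag(w₁,…,w_s,1,…,1) a k×k diagonal matrix with nonzero w_i, and W_H = diag(w₁,…,w_s). Then there exist g_{s+1},…,g_k ∈ 𝔽ⁿ such that GW is a dual frame for F, where G = [H g_{s+1} … g_k], if and only if there exists an n×(k−n) matrix A with H = [I_n A] P₁ W_H⁻¹. -/
open Matrix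

lemma mul_toColumns₁ {R : Type*} [CommRing R] {m n₁ n₂ k : Type*} [Fintype k]
    (B : Matrix m k R) (P : Matrix k (n₁ ⊕ n₂) R) :
    (B * P).toCols₁ = B * P.toCols₁ := by
  ext i j
  simp [toCols₁, mul_apply]

lemma mul_toColumns₂ {R : Type*} [CommRing R] {m n₁ n₂ k : Type*} [Fintype k]
    (B : Matrix m k R) (P : Matrix k (n₁ ⊕ n₂) R) :
    (B * P).toCols₂ = B * P.toCols₂ := by
  ext i j
  simp [toCols₂, mul_apply]

/-- Scaled dual frame completion: `[H G'] W` is a dual frame for `F` for some `G'` iff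
`H = [1 A] P₁ W_H⁻¹` for some `A`, where `P₁` is the left `k×s` block of `P` and
`W = diag(w₁,…,w_s,1,…,1)`, `W_H = diag(w₁,…,w_s)`. -/
theorem scaled_dual_frame_completion_indirect
    {𝕜 : Type*} [RCLike 𝕜] {n m s t : ℕ}
    (F : Matrix (Fin n) (Fin s ⊕ Fin t) 𝕜)
    (hF : F.rank = n)
    (P : Matrix (Fin n ⊕ Fin m) (Fin s ⊕ Fin t) 𝕜)
    (Q : Matrix (Fin s ⊕ Fin t) (Fin n ⊕ Fin m) 𝕜)
    (hPQ : P * Q = 1) (hQP : Q * P = 1)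
    (hP : P * Fᴴ = fromRows (1 : Matrix (Fin n) (Fin n) 𝕜) (0 : Matrix (Fin m) (Fin n) 𝕜))
    (w : Fin s → 𝕜) (hw : ∀ i, w i ≠ 0)
    (H : Matrix (Fin n) (Fin s) 𝕜) :
    (∃ G' : Matrix (Fin n) (Fin t) 𝕜,
        F * (fromCols H G' * Matrix.diagonal (Sum.elim w fun _ => (1 : 𝕜)))ᴴ = 1) ↔
      ∃ A : Matrix (Fin n) (Fin m) 𝕜,
        H = fromCols (1 : Matrix (Fin n) (Fin n) 𝕜) A *
          (P.submatrix id Sum.inl) * (Matrix.diagonal w)⁻¹ := by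
  have hdet : IsUnit (Matrix.diagonal w).det := by
    rw [Matrix.det_diagonal]
    exact (Finset.prod_ne_zero_iff.mpr fun i _ => hw i).isUnit
  have hWinv : Matrix.diagonal w * (Matrix.diagonal w)⁻¹ = 1 :=
    Matrix.mul_nonsing_inv _ hdet
  have hWinv' : (Matrix.diagonal w)⁻¹ * Matrix.diagonal w = 1 :=
    Matrix.nonsing_inv_mul _ hdet
  have hP₁ : P.submatrix id Sum.inl = P.toCols₁ := rfl
  -- the big diagonal matrix as a block matrix
  have hW : Matrix.diagonal (Sum.elim w fun _ => (1 : 𝕜)) =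
      fromBlocks (Matrix.diagonal w) 0 0 (1 : Matrix (Fin t) (Fin t) 𝕜) := by
    rw [← Matrix.fromBlocks_diagonal, Matrix.diagonal_one]
  -- characterization of dual frames
  have key : ∀ X : Matrix (Fin n) (Fin s ⊕ Fin t) 𝕜,
      F * Xᴴ = 1 ↔ ∃ A : Matrix (Fin n) (Fin m) 𝕜,
        X = fromCols (1 : Matrix (Fin n) (Fin n) 𝕜) A * P := by
    intro X
    have hconj : F * Xᴴ = 1 ↔ X * Fᴴ = 1 := by
      constructor <;> intro h
      · have := congrArg conjTranspose h
        simpa [conjTranspose_mul] using this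
      · have := congrArg conjTranspose h
        simpa [conjTranspose_mul] using this
    rw [hconj]
    constructor
    · intro h
      refine ⟨(X * Q).toCols₂, ?_⟩
      have h1 : (X * Q).toCols₁ = 1 := by
        have : (X * Q) * (P * Fᴴ) = 1 := by
          rw [← Matrix.mul_assoc, Matrix.mul_assoc X Q P, hQP, Matrix.mul_one, h]
        rw [hP, ← fromCols_toCols (X * Q), fromCols_mul_fromRows,
          Matrix.mul_one, Matrix.mul_zero, add_zero] at this
        simpa [fromCols_toCols] using this
      calc X = (X * Q) * P := by rw [Matrix.mul_assoc, hQP, Matrix.mul_one]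
        _ = fromCols 1 ((X * Q).toCols₂) * P := by
            rw [← h1, fromCols_toCols]
            rfl
    · rintro ⟨A, rfl⟩
      rw [Matrix.mul_assoc, hP, fromCols_mul_fromRows, Matrix.mul_one,
        Matrix.mul_zero, add_zero]
  constructor
  · rintro ⟨G', hG⟩
    obtain ⟨A, hA⟩ := (key _).mp hG
    refine ⟨A, ?_⟩
    erw [hW, fromCols_mul_fromBlocks] at hA
    have := congrArg toCols₁ hA
    simp only [toCols₁_fromCols, mul_toColumns₁, Matrix.mul_zero, add_zero,
      Matrix.mul_one] at this
    rw [hP₁, ← this, Matrix.mul_assoc, hWinv, Matrix.mul_one]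
  · rintro ⟨A, hA⟩
    refine ⟨fromCols (1 : Matrix (Fin n) (Fin n) 𝕜) A * P.toCols₂, ?_⟩
    apply (key _).mpr
    refine ⟨A, ?_⟩
    erw [hW, fromCols_mul_fromBlocks, Matrix.mul_zero, add_zero, Matrix.mul_zero,
      zero_add, Matrix.mul_one, hA, hP₁]
    simp only [Matrix.mul_assoc]
    rw [hWinv', Matrix.mul_one, ← mul_toColumns₁, ← mul_toColumns₂, fromCols_toCols]
end

section
/- Let F = UΣV* be the SVD of an n×k full-row-rank matrix F, Σ = [D 0], D = diag(σ₁,…,σ_n), σ_i > 0. Partition V* into blocks V*_{n×s} (top-left n×s), V*_{(k−n)×s} (bottom-left (k−n)×s). Given an n×s matrix H with s ≤ k, there exists a dual frame G of F whose first s columns equal H if and only if every column of H*U − (V*_{n×s})* (D⁻¹)* lies in the column span of (V*_{(k−n)×s})*. -/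
open Matrix

private lemma toRows₁_mul' {α β γ δ : Type*} [Fintype γ] (P : Matrix (α ⊕ β) γ ℂ)
    (Q : Matrix γ δ ℂ) : toRows₁ (P * Q) = toRows₁ P * Q := by
  ext i j; simp [toRows₁, mul_apply]

private lemma fromColumns_mul_eq {α β γ δ : Type*} [Fintype β] [Fintype γ]
    (A : Matrix α β ℂ)
    (B : Matrix α γ ℂ) (W : Matrix (β ⊕ γ) δ ℂ) :
    fromCols A B * W = A * toRows₁ W + B * toRows₂ W := by
  conv_lhs => rw [← fromRows_toRows W]
  rw [fromCols_mul_fromRows]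

private lemma exists_mul_eq_iff_span {p q r : ℕ} (B : Matrix (Fin p) (Fin q) ℂ)
    (M : Matrix (Fin p) (Fin r) ℂ) :
    (∃ X : Matrix (Fin q) (Fin r) ℂ, B * X = M) ↔
      ∀ j, (fun i => M i j) ∈
        Submodule.span ℂ (Set.range fun c => (fun i => B i c)) := by
  constructor
  · rintro ⟨X, rfl⟩ j
    rw [Submodule.mem_span_range_iff_exists_fun]
    refine ⟨fun c => X c j, ?_⟩
    funext i
    simp [mul_apply, Finset.sum_apply, mul_comm]
  · intro h
    choose f hf using fun j => (Submodule.mem_span_range_iff_exists_fun ℂ).mp (h j)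
    refine ⟨Matrix.of fun c j => f j c, ?_⟩
    ext i j
    have := congrFun (hf j) i
    simpa [mul_apply, Finset.sum_apply, mul_comm] using this

/-- SVD approach to dual frame completion: there exists a dual frame `G` of `F` whose
first `s` columns equal `H` iff every column of `Hᴴ U - (Vᴴ₁₁)ᴴ (D⁻¹)ᴴ` lies in the
column span of `(Vᴴ₂₁)ᴴ`. -/
theorem dual_frame_completion_svd
    {n m s t : ℕ}
    (F : Matrix (Fin n) (Fin s ⊕ Fin t) ℂ)
    (hF : F.rank = n)
    (U : Matrix (Fin n) (Fin n) ℂ)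
    (V : Matrix (Fin s ⊕ Fin t) (Fin n ⊕ Fin m) ℂ)
    (hU : Uᴴ * U = 1 ∧ U * Uᴴ = 1)
    (hV : Vᴴ * V = 1 ∧ V * Vᴴ = 1)
    (σ : Fin n → ℝ) (hσ : ∀ i, 0 < σ i)
    (hSVD : F = U * fromCols (Matrix.diagonal fun i => (σ i : ℂ))
        (0 : Matrix (Fin n) (Fin m) ℂ) * Vᴴ)
    (H : Matrix (Fin n) (Fin s) ℂ) :
    (∃ G : Matrix (Fin n) (Fin s ⊕ Fin t) ℂ,
        F * Gᴴ = 1 ∧ ∀ i j, G i (Sum.inl j) = H i j) ↔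
      ∀ j : Fin n,
        (fun i => (Hᴴ * U -
            ((Vᴴ.toBlocks₁₁)ᴴ) * ((Matrix.diagonal fun i => ((σ i : ℂ))⁻¹)ᴴ)) i j) ∈
          Submodule.span ℂ (Set.range fun c => (fun i => ((Vᴴ.toBlocks₂₁)ᴴ) i c)) := by
  obtain ⟨hU1, hU2⟩ := hU
  obtain ⟨hV1, hV2⟩ := hV
  set D : Matrix (Fin n) (Fin n) ℂ := Matrix.diagonal fun i => (σ i : ℂ) with hDdef
  set Di : Matrix (Fin n) (Fin n) ℂ := Matrix.diagonal fun i => ((σ i : ℂ))⁻¹ with hDidef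
  have hσne : ∀ i, (σ i : ℂ) ≠ 0 := fun i => by exact_mod_cast (hσ i).ne'
  have hDDi : D * Di = 1 := by
    rw [hDdef, hDidef, diagonal_mul_diagonal,
      show (fun i => (σ i : ℂ) * ((σ i : ℂ))⁻¹) = fun _ => 1 from
        funext fun i => mul_inv_cancel₀ (hσne i), diagonal_one]
  have hDiD : Di * D = 1 := by
    rw [hDdef, hDidef, diagonal_mul_diagonal,
      show (fun i => ((σ i : ℂ))⁻¹ * (σ i : ℂ)) = fun _ => 1 from
        funext fun i => inv_mul_cancel₀ (hσne i), diagonal_one]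
  have hDiH : Diᴴ = Di := by
    rw [hDidef, diagonal_conjTranspose,
      show (star fun i => ((σ i : ℂ))⁻¹) = fun i => ((σ i : ℂ))⁻¹ from
        funext fun i => by
          simp [Pi.star_apply, Complex.star_def, map_inv₀, Complex.conj_ofReal]]
  set V₁₁ : Matrix (Fin s) (Fin n) ℂ := (Vᴴ.toBlocks₁₁)ᴴ with hV₁₁
  set V₁₂ : Matrix (Fin s) (Fin m) ℂ := (Vᴴ.toBlocks₂₁)ᴴ with hV₁₂
  have hrowsV : toRows₁ V = fromCols V₁₁ V₁₂ := by
    ext i c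
    cases c <;>
      simp [toRows₁, fromCols, hV₁₁, hV₁₂, toBlocks₁₁, toBlocks₂₁, conjTranspose_apply]
  rw [← exists_mul_eq_iff_span V₁₂ (Hᴴ * U - V₁₁ * Diᴴ), hDiH]
  constructor
  · rintro ⟨G, hG1, hG2⟩
    have hGH : toRows₁ Gᴴ = Hᴴ := by
      ext j i; simp [toRows₁, conjTranspose_apply, hG2]
    have h1 : Uᴴ * (F * Gᴴ) * U = 1 := by rw [hG1, Matrix.mul_one, hU1]
    rw [hSVD] at h1
    have h2 : fromCols D (0 : Matrix (Fin n) (Fin m) ℂ) * (Vᴴ * (Gᴴ * U)) = 1 := by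
      rw [← h1]
      simp only [Matrix.mul_assoc]
      rw [← Matrix.mul_assoc Uᴴ U, hU1, Matrix.one_mul]
    rw [fromColumns_mul_eq] at h2
    simp only [Matrix.zero_mul, add_zero] at h2
    have hW1 : toRows₁ (Vᴴ * (Gᴴ * U)) = Di := by
      have h3 := congrArg (fun M => Di * M) h2
      simp only [← Matrix.mul_assoc, hDiD, Matrix.one_mul, Matrix.mul_one] at h3
      rw [Matrix.mul_assoc] at h3
      exact h3
    have h4 : Hᴴ * U = V₁₁ * Di + V₁₂ * toRows₂ (Vᴴ * (Gᴴ * U)) := by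
      have h5 : toRows₁ (Gᴴ * U) = toRows₁ (V * (Vᴴ * (Gᴴ * U))) := by
        rw [← Matrix.mul_assoc, hV2, Matrix.one_mul]
      rw [toRows₁_mul', toRows₁_mul', hGH, hrowsV, fromColumns_mul_eq, hW1] at h5
      exact h5
    exact ⟨toRows₂ (Vᴴ * (Gᴴ * U)), by rw [h4, add_sub_cancel_left]⟩
  · rintro ⟨X, hX⟩
    refine ⟨(V * fromRows Di X * Uᴴ)ᴴ, ?_, ?_⟩
    · rw [conjTranspose_conjTranspose, hSVD]
      simp only [Matrix.mul_assoc]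
      rw [← Matrix.mul_assoc Vᴴ V, hV1, Matrix.one_mul,
        ← Matrix.mul_assoc (fromCols D 0) (fromRows Di X),
        fromCols_mul_fromRows, hDDi, Matrix.zero_mul, add_zero, Matrix.one_mul, hU2]
    · intro i j
      have hrow : toRows₁ (V * fromRows Di X * Uᴴ) = Hᴴ := by
        rw [toRows₁_mul', toRows₁_mul', hrowsV, fromCols_mul_fromRows,
          hX, add_sub_cancel,
          Matrix.mul_assoc, hU2, Matrix.mul_one]
      have h6 := congrFun (congrFun hrow j) i
      rw [toRows₁_apply] at h6
      rw [conjTranspose_apply, h6, conjTranspose_apply, star_star]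
end
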